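/- Write $p = \sup_{u \in \Omega} \dim_P F_u$ for a RIFS of bi-Lipschitz contractions, and suppose there exists $v = (v_1, v_2, \dots) \in \Omega$ with $\lim_{k\to\infty} \sum_{j_1 \in \mathcal{I}_{v_1}, \dots, j_k \in \mathcal{I}_{v_k}} \mathrm{Lip}^+(S_{v_1,j_1} \circ \cdots \circ S_{v_k,j_k})^p = 0$, and that $\sup_{u \in \Omega} \mathcal{P}^p(F_u) < \infty$. Then the set $\{\omega \in \Omega : \mathcal{P}^p(F_\omega) = 0\}$ is residual in $(\Omega, d_\Omega)$. -/

import Mathlib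

open Metric MeasureTheory Filter Set
open scoped ENNReal NNReal

noncomputable def ratioSet {K : Type*} [MetricSpace K] (φ : K → K) : Set ℝ :=
  {r | ∃ x y : K, x ≠ y ∧ r = dist (φ x) (φ y) / dist x y}

/-- `Lip⁻(φ) = inf_{x ≠ y} d(φx,φy)/d(x,y)`. -/
noncomputable def lipMinus {K : Type*} [MetricSpace K] (φ : K → K) : ℝ := sInf (ratioSet φ)

/-- `Lip⁺(φ) = sup_{x ≠ y} d(φx,φy)/d(x,y)`. -/
noncomputable def lipPlus {K : Type*} [MetricSpace K] (φ : K → K) : ℝ := sSup (ratioSet φ)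

/-- `φ` is bi-Lipschitz: `0 < Lip⁻(φ)` and `Lip⁺(φ) < ∞`. -/
def BiLipschitzMap {K : Type*} [MetricSpace K] (φ : K → K) : Prop :=
  0 < lipMinus φ ∧ BddAbove (ratioSet φ)

/-- Packing pre-measure with respect to the gauge `G` (applied to the diameters `2r`
of the balls of a countable centred `δ`-packing), as `δ → 0`. -/
noncomputable def packingPre {K : Type*} [MetricSpace K] (G : ℝ → ℝ) (F : Set K) : ℝ≥0∞ :=
  ⨅ (δ : ℝ) (_ : 0 < δ),
    ⨆ (s : Set ℕ) (c : ℕ → K) (r : ℕ → ℝ)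
      (_ : ∀ n ∈ s, c n ∈ F ∧ 0 < r n ∧ 2 * r n ≤ δ)
      (_ : s.PairwiseDisjoint fun n => Metric.closedBall (c n) (r n)),
      ∑' n : s, ENNReal.ofReal (G (2 * r n))

/-- Packing measure with respect to the gauge `G`. -/
noncomputable def packingMeasure {K : Type*} [MetricSpace K] (G : ℝ → ℝ) (F : Set K) : ℝ≥0∞ :=
  ⨅ (E : ℕ → Set K) (_ : F ⊆ ⋃ n, E n), ∑' n, packingPre G (E n)

/-- Packing dimension, defined from the packing measures `𝒫^s`. -/
noncomputable def packingDim {K : Type*} [MetricSpace K] (F : Set K) : ℝ≥0∞ :=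
  ⨆ (s : ℝ) (_ : 0 ≤ s) (_ : packingMeasure (fun t => t ^ s) F = ⊤), ENNReal.ofReal s

/-- The level-`k` approximation of the random attractor: the union over all length-`k`
words `(i₁,…,i_k)` with `i_l ∈ 𝓘_{ω_l}` of `S_{ω₁,i₁} ∘ ⋯ ∘ S_{ω_k,i_k}(K₀)`. -/
def levelSets {X : Type*} {N : ℕ} (m : Fin N → ℕ) (S : ∀ i, Fin (m i) → X → X) (K₀ : Set X) :
    (ℕ → Fin N) → ℕ → Set X
  | _, 0 => K₀
  | ω, k+1 => ⋃ j : Fin (m (ω 0)), S (ω 0) j '' levelSets m S K₀ (fun n => ω (n+1)) k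

/-- The random attractor `F_ω = ⋂_k ⋃_{i₁,…,i_k} S_{ω₁,i₁} ∘ ⋯ ∘ S_{ω_k,i_k}(K₀)`. -/
def attractorOf {X : Type*} {N : ℕ} (m : Fin N → ℕ) (S : ∀ i, Fin (m i) → X → X)
    (K₀ : Set X) (ω : ℕ → Fin N) : Set X :=
  ⋂ k, levelSets m S K₀ ω k

/-- `φ` is a bi-Lipschitz contraction. -/
def IsBiLipContraction {K : Type*} [MetricSpace K] (φ : K → K) : Prop :=
  ∃ c C : ℝ, 0 < c ∧ C < 1 ∧
    ∀ x y, c * dist x y ≤ dist (φ x) (φ y) ∧ dist (φ x) (φ y) ≤ C * dist x y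

/-- The composition `S_{ω₁,j₁} ∘ ⋯ ∘ S_{ω_k,j_k}` associated to a word `j` of length `k`. -/
def wordMap {X : Type*} {N : ℕ} (m : Fin N → ℕ) (S : ∀ i, Fin (m i) → X → X) :
    (ω : ℕ → Fin N) → (k : ℕ) → (∀ l : Fin k, Fin (m (ω l))) → X → X
  | _, 0, _ => id
  | ω, k+1, j => S (ω 0) (j 0) ∘ wordMap m S (fun n => ω (n+1)) k (fun l => j l.succ)


section API
variable {K : Type*} [MetricSpace K] {G : ℝ → ℝ}

/-- the δ-packing supremum -/
noncomputable def packSup (G : ℝ → ℝ) (F : Set K) (δ : ℝ) : ℝ≥0∞ :=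
  ⨆ (s : Set ℕ) (c : ℕ → K) (r : ℕ → ℝ)
      (_ : ∀ n ∈ s, c n ∈ F ∧ 0 < r n ∧ 2 * r n ≤ δ)
      (_ : s.PairwiseDisjoint fun n => Metric.closedBall (c n) (r n)),
      ∑' n : s, ENNReal.ofReal (G (2 * r n))

lemma packingPre_eq (F : Set K) : packingPre G F = ⨅ (δ : ℝ) (_ : 0 < δ), packSup G F δ := rfl

lemma packingPre_le (F : Set K) {δ : ℝ} (hδ : 0 < δ) : packingPre G F ≤ packSup G F δ :=
  iInf₂_le δ hδ

lemma le_packSup {F : Set K} {δ : ℝ} (s : Set ℕ) (c : ℕ → K) (r : ℕ → ℝ)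
    (h1 : ∀ n ∈ s, c n ∈ F ∧ 0 < r n ∧ 2 * r n ≤ δ)
    (h2 : s.PairwiseDisjoint fun n => Metric.closedBall (c n) (r n)) :
    ∑' n : s, ENNReal.ofReal (G (2 * r n)) ≤ packSup G F δ := by
  refine le_iSup_of_le s ?_
  refine le_iSup_of_le c ?_
  refine le_iSup_of_le r ?_
  refine le_iSup_of_le h1 ?_
  exact le_iSup_of_le h2 le_rfl

lemma packSup_empty {δ : ℝ} : packSup G (∅ : Set K) δ = 0 := by
  refine le_antisymm ?_ zero_le
  refine iSup_le fun s => iSup_le fun c => iSup_le fun r => iSup_le fun h1 => iSup_le fun _ => ?_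
  have hs : s = ∅ := by
    by_contra h
    obtain ⟨n, hn⟩ := Set.nonempty_iff_ne_empty.2 h
    exact (h1 n hn).1
  subst hs
  simp

lemma packingPre_empty : packingPre G (∅ : Set K) = 0 := by
  refine le_antisymm ?_ zero_le
  calc packingPre G (∅ : Set K) ≤ packSup G ∅ 1 := packingPre_le _ one_pos
  _ = 0 := packSup_empty

lemma packingMeasure_le_tsum {F : Set K} (E : ℕ → Set K) (h : F ⊆ ⋃ n, E n) :
    packingMeasure G F ≤ ∑' n, packingPre G (E n) :=
  iInf₂_le E h

lemma packingMeasure_mono {A B : Set K} (h : A ⊆ B) :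
    packingMeasure G A ≤ packingMeasure G B := by
  refine le_iInf fun E => le_iInf fun hE => ?_
  exact packingMeasure_le_tsum E (h.trans hE)

set_option maxHeartbeats 1000000 in
lemma packingMeasure_union_le (A B : Set K) :
    packingMeasure G (A ∪ B) ≤ packingMeasure G A + packingMeasure G B := by
  by_cases hA : packingMeasure G A = ⊤
  · rw [hA]; simp
  by_cases hB : packingMeasure G B = ⊤
  · rw [hB]; simp
  refine ENNReal.le_of_forall_pos_le_add fun ε hε _ => ?_
  have hε2 : (0:ℝ≥0∞) < (ε/2 : ℝ≥0) := by
    have : (0:ℝ≥0) < ε/2 := by positivity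
    exact_mod_cast this
  have hA' : packingMeasure G A < packingMeasure G A + (ε/2 : ℝ≥0) :=
    ENNReal.lt_add_right hA (by exact_mod_cast hε2.ne')
  have hB' : packingMeasure G B < packingMeasure G B + (ε/2 : ℝ≥0) :=
    ENNReal.lt_add_right hB (by exact_mod_cast hε2.ne')
  rw [packingMeasure, iInf_lt_iff] at hA' hB'
  obtain ⟨EA, hEA⟩ := hA'
  rw [iInf_lt_iff] at hEA
  obtain ⟨hEA0, hEA⟩ := hEA
  obtain ⟨EB, hEB⟩ := hB'
  rw [iInf_lt_iff] at hEB
  obtain ⟨hEB0, hEB⟩ := hEB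
  set E' : ℕ → Set K := fun n => if Even n then EA (n/2) else EB (n/2) with hE'
  have hcov : A ∪ B ⊆ ⋃ n, E' n := by
    rintro x (hx | hx)
    · obtain ⟨t, ⟨k, rfl⟩, hk⟩ := hEA0 hx
      exact Set.mem_iUnion.2 ⟨2*k, by simpa [hE', Nat.mul_div_cancel_left k two_pos] using hk⟩
    · obtain ⟨t, ⟨k, rfl⟩, hk⟩ := hEB0 hx
      refine Set.mem_iUnion.2 ⟨2*k+1, ?_⟩
      have h1 : ¬ Even (2*k+1) := by simp [Nat.even_add_one, Nat.even_mul]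
      have h2 : (2*k+1)/2 = k := by omega
      simp [hE', h1, h2, hk]
  have hsum : ∑' n, packingPre G (E' n)
      = (∑' n, packingPre G (EA n)) + ∑' n, packingPre G (EB n) := by
    rw [← tsum_even_add_odd (f := fun n => packingPre G (E' n)) ENNReal.summable ENNReal.summable]
    congr 1
    · refine tsum_congr fun k => ?_
      simp [hE', Nat.mul_div_cancel_left k two_pos]
    · refine tsum_congr fun k => ?_
      have h1 : ¬ Even (2*k+1) := by simp [Nat.even_add_one, Nat.even_mul]
      have h2 : (2*k+1)/2 = k := by omega
      simp [hE', h1, h2]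
  calc packingMeasure G (A ∪ B) ≤ ∑' n, packingPre G (E' n) := packingMeasure_le_tsum E' hcov
  _ = (∑' n, packingPre G (EA n)) + ∑' n, packingPre G (EB n) := hsum
  _ ≤ (packingMeasure G A + (ε/2:ℝ≥0)) + (packingMeasure G B + (ε/2:ℝ≥0)) :=
      add_le_add hEA.le hEB.le
  _ = packingMeasure G A + packingMeasure G B + ((ε/2:ℝ≥0) + (ε/2:ℝ≥0)) := by ring
  _ = packingMeasure G A + packingMeasure G B + ε := by
      congr 1
      exact congrArg (fun x : ℝ≥0 => (x : ℝ≥0∞)) (add_halves ε)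

end API

section API2
variable {K : Type*} [MetricSpace K] {G : ℝ → ℝ}

lemma packingMeasure_biUnion_le {ι : Type*} (A : ι → Set K) (t : Finset ι) :
    packingMeasure G (⋃ i ∈ t, A i) ≤ ∑ i ∈ t, packingMeasure G (A i) := by
  classical
  induction t using Finset.induction_on with
  | empty =>
      simp only [Finset.notMem_empty, Set.iUnion_of_empty, Set.iUnion_empty, Finset.sum_empty]
      calc packingMeasure G (∅ : Set K)
          ≤ ∑' _ : ℕ, packingPre G (∅ : Set K) :=
            packingMeasure_le_tsum (fun _ => ∅) (by simp)
        _ = 0 := by simp [packingPre_empty]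
  | insert _ _ hnotmem ih =>
      rename_i a s
      rw [Finset.sum_insert hnotmem]
      refine le_trans (le_of_eq (congrArg _ ?_)) <|
        le_trans (packingMeasure_union_le (A a) (⋃ i ∈ s, A i)) (add_le_add_right ih _)
      exact Finset.set_biUnion_insert a s A

lemma packingMeasure_iUnion_le {ι : Type*} [Fintype ι] (A : ι → Set K) :
    packingMeasure G (⋃ i, A i) ≤ ∑ i, packingMeasure G (A i) := by
  have : (⋃ i, A i) = ⋃ i ∈ Finset.univ, A i := by simp
  rw [this]
  exact packingMeasure_biUnion_le A Finset.univ

lemma packSup_image_le {φ : K → K} {p L : ℝ} (hp0 : 0 ≤ p) (hL : 0 < L)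
    (hlip : ∀ x y, dist (φ x) (φ y) ≤ L * dist x y) (A : Set K) {δ : ℝ} (hδ : 0 < δ) :
    packSup (fun t => t ^ p) (φ '' A) (L * δ) ≤
      ENNReal.ofReal (L ^ p) * packSup (fun t => t ^ p) A δ := by
  refine iSup_le fun s => iSup_le fun c => iSup_le fun r => iSup_le fun h1 => iSup_le fun h2 => ?_
  classical
  -- pull back centers and radii
  have hpre : ∀ n : ℕ, ∃ x : K, n ∈ s → (x ∈ A ∧ φ x = c n) := by
    intro n
    by_cases hn : n ∈ s
    · obtain ⟨x, hx, hφ⟩ := (h1 n hn).1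
      exact ⟨x, fun _ => ⟨hx, hφ⟩⟩
    · exact ⟨c n, fun h => absurd h hn⟩
  choose a haspec using hpre
  have ha : ∀ n ∈ s, a n ∈ A := fun n hn => (haspec n hn).1
  have hφa : ∀ n ∈ s, φ (a n) = c n := fun n hn => (haspec n hn).2
  set r' : ℕ → ℝ := fun n => r n / L with hr'
  have h1' : ∀ n ∈ s, a n ∈ A ∧ 0 < r' n ∧ 2 * r' n ≤ δ := by
    intro n hn
    refine ⟨ha n hn, div_pos (h1 n hn).2.1 hL, ?_⟩
    have h := (h1 n hn).2.2
    show 2 * (r n / L) ≤ δ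
    rw [show 2 * (r n / L) = 2 * r n / L from by ring, div_le_iff₀ hL]
    linarith
  have h2' : s.PairwiseDisjoint fun n => Metric.closedBall (a n) (r' n) := by
    intro n hn m hm hnm
    refine Set.disjoint_left.2 fun z hzn hzm => ?_
    have hz : ∀ i, i ∈ s → z ∈ Metric.closedBall (a i) (r' i) → φ z ∈ Metric.closedBall (c i) (r i) := by
      intro i hi hzi
      rw [Metric.mem_closedBall] at hzi ⊢
      calc dist (φ z) (c i) = dist (φ z) (φ (a i)) := by rw [hφa i hi]
      _ ≤ L * dist z (a i) := hlip _ _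
      _ ≤ L * r' i := by
            have : dist z (a i) ≤ r' i := hzi
            exact mul_le_mul_of_nonneg_left this hL.le
      _ = r i := by show L * (r i / L) = r i; field_simp
    exact Set.disjoint_left.1 (h2 hn hm hnm) (hz n hn hzn) (hz m hm hzm)
  calc (∑' n : s, ENNReal.ofReal ((2 * r n) ^ p))
      = ∑' n : s, ENNReal.ofReal (L ^ p) * ENNReal.ofReal ((2 * r' ↑n) ^ p) := by
        refine tsum_congr fun n => ?_
        have hrn : r (n : ℕ) = L * r' (n : ℕ) := by
          show r (n:ℕ) = L * (r (n:ℕ) / L); field_simp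
        rw [← ENNReal.ofReal_mul (Real.rpow_nonneg hL.le p)]
        congr 1
        have hr'pos : (0:ℝ) ≤ 2 * r' (n:ℕ) := by
          have := (h1' (n:ℕ) n.2).2.1; linarith
        rw [← Real.mul_rpow hL.le hr'pos]
        congr 1
        rw [hrn]; ring
    _ = ENNReal.ofReal (L ^ p) * ∑' n : s, ENNReal.ofReal ((2 * r' ↑n) ^ p) :=
        ENNReal.tsum_mul_left
    _ ≤ ENNReal.ofReal (L ^ p) * packSup (fun t => t ^ p) A δ := by
        gcongr
        exact le_packSup s a r' h1' h2'

lemma packingPre_image_le {φ : K → K} {p L : ℝ} (hp0 : 0 ≤ p) (hL : 0 < L)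
    (hlip : ∀ x y, dist (φ x) (φ y) ≤ L * dist x y) (A : Set K) :
    packingPre (fun t => t ^ p) (φ '' A) ≤ ENNReal.ofReal (L ^ p) * packingPre (fun t => t ^ p) A := by
  have hc0 : ENNReal.ofReal (L ^ p) ≠ 0 := by
    simp only [ne_eq, ENNReal.ofReal_eq_zero, not_le]
    exact Real.rpow_pos_of_pos hL p
  have hct : ENNReal.ofReal (L ^ p) ≠ ⊤ := ENNReal.ofReal_ne_top
  rw [mul_comm, ← ENNReal.div_le_iff hc0 hct]
  rw [packingPre_eq]
  refine le_iInf fun δ => le_iInf fun hδ => ?_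
  rw [ENNReal.div_le_iff hc0 hct, mul_comm]
  calc packingPre (fun t => t ^ p) (φ '' A) ≤ packSup (fun t => t ^ p) (φ '' A) (L * δ) :=
        packingPre_le _ (by positivity)
  _ ≤ ENNReal.ofReal (L ^ p) * packSup (fun t => t ^ p) A δ := packSup_image_le hp0 hL hlip A hδ

lemma packingMeasure_image_le {φ : K → K} {p L : ℝ} (hp0 : 0 ≤ p) (hL : 0 < L)
    (hlip : ∀ x y, dist (φ x) (φ y) ≤ L * dist x y) (A : Set K) :
    packingMeasure (fun t => t ^ p) (φ '' A) ≤
      ENNReal.ofReal (L ^ p) * packingMeasure (fun t => t ^ p) A := by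
  have hc0 : ENNReal.ofReal (L ^ p) ≠ 0 := by
    simp only [ne_eq, ENNReal.ofReal_eq_zero, not_le]
    exact Real.rpow_pos_of_pos hL p
  have hct : ENNReal.ofReal (L ^ p) ≠ ⊤ := ENNReal.ofReal_ne_top
  rw [mul_comm, ← ENNReal.div_le_iff hc0 hct, packingMeasure]
  refine le_iInf fun E => le_iInf fun hE => ?_
  rw [ENNReal.div_le_iff hc0 hct, mul_comm]
  have hcov : φ '' A ⊆ ⋃ n, φ '' (E n) := by
    rw [← Set.image_iUnion]
    exact Set.image_mono hE
  calc packingMeasure (fun t => t ^ p) (φ '' A) ≤ ∑' n, packingPre (fun t => t ^ p) (φ '' E n) :=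
        packingMeasure_le_tsum _ hcov
  _ ≤ ∑' n, ENNReal.ofReal (L ^ p) * packingPre (fun t => t ^ p) (E n) := by
        exact ENNReal.tsum_le_tsum fun n => packingPre_image_le hp0 hL hlip (E n)
  _ = ENNReal.ofReal (L ^ p) * ∑' n, packingPre (fun t => t ^ p) (E n) := ENNReal.tsum_mul_left

end API2

section Words
variable {K : Type*} [MetricSpace K] {N : ℕ} {m : Fin N → ℕ}
  {S : ∀ i, Fin (m i) → K → K}

lemma levelSets_succ_subset (hS : ∀ i j, IsBiLipContraction (S i j)) :
    ∀ (k : ℕ) (ω : ℕ → Fin N), levelSets m S Set.univ ω (k+1) ⊆ levelSets m S Set.univ ω k := by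
  intro k
  induction k with
  | zero => intro ω; simp [levelSets]
  | succ k ih =>
      intro ω
      show (⋃ j : Fin (m (ω 0)), S (ω 0) j '' levelSets m S Set.univ (fun n => ω (n+1)) (k+1)) ⊆
        ⋃ j : Fin (m (ω 0)), S (ω 0) j '' levelSets m S Set.univ (fun n => ω (n+1)) k
      exact Set.iUnion_mono fun j => Set.image_mono (ih _)

lemma levelSets_antitone (hS : ∀ i j, IsBiLipContraction (S i j)) (ω : ℕ → Fin N) :
    Antitone (levelSets m S Set.univ ω) :=
  antitone_nat_of_succ_le fun k => levelSets_succ_subset hS k ω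

lemma bilip_injective {φ : K → K} (h : IsBiLipContraction φ) : Function.Injective φ := by
  obtain ⟨c, C, hc, _, hb⟩ := h
  intro x y hxy
  by_contra hne
  have hd : 0 < dist x y := dist_pos.2 hne
  have := (hb x y).1
  rw [hxy, dist_self] at this
  nlinarith

/-- decomposition of the attractor along the first k symbols -/
lemma attractor_decomp (hS : ∀ i j, IsBiLipContraction (S i j)) :
    ∀ (k : ℕ) (ω : ℕ → Fin N),
      attractorOf m S Set.univ ω ⊆
        ⋃ j : (∀ l : Fin k, Fin (m (ω l))),
          wordMap m S ω k j '' attractorOf m S Set.univ (fun n => ω (n + k)) := by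
  intro k
  induction k with
  | zero =>
      intro ω x hx
      refine Set.mem_iUnion.2 ⟨fun l => l.elim0, ?_⟩
      exact ⟨x, by simpa using hx, rfl⟩
  | succ k ih =>
      intro ω x hx
      -- first: x ∈ ⋃ j0, S (ω 0) j0 '' F_{σω}
      have hlev : ∀ n, x ∈ levelSets m S Set.univ ω (n+1) := fun n => Set.mem_iInter.1 hx (n+1)
      have hpig : ∃ j0 : Fin (m (ω 0)), ∀ n,
          x ∈ S (ω 0) j0 '' levelSets m S Set.univ (fun i => ω (i+1)) n := by
        by_contra hcon
        push_neg at hcon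
        choose nn hnn using hcon
        set Nmax := Finset.univ.sup nn with hNmax
        have hx' := hlev Nmax
        rw [show levelSets m S Set.univ ω (Nmax+1) =
            ⋃ j : Fin (m (ω 0)), S (ω 0) j '' levelSets m S Set.univ (fun i => ω (i+1)) Nmax
            from rfl] at hx'
        obtain ⟨j0, hj0⟩ := Set.mem_iUnion.1 hx'
        have hsub : levelSets m S Set.univ (fun i => ω (i+1)) Nmax ⊆
            levelSets m S Set.univ (fun i => ω (i+1)) (nn j0) :=
          levelSets_antitone hS _ (Finset.le_sup (Finset.mem_univ j0))
        exact hnn j0 (Set.image_mono hsub hj0)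
      obtain ⟨j0, hj0⟩ := hpig
      -- injectivity: unique preimage
      have hinj := bilip_injective (hS (ω 0) j0)
      obtain ⟨y0, hy0, hxy0⟩ := hj0 0
      have hy0mem : y0 ∈ attractorOf m S Set.univ (fun i => ω (i+1)) := by
        refine Set.mem_iInter.2 fun n => ?_
        obtain ⟨yn, hyn, hxyn⟩ := hj0 n
        rwa [show yn = y0 from hinj (hxyn.trans hxy0.symm)] at hyn
      -- apply ih to σω
      have := ih (fun i => ω (i+1)) hy0mem
      obtain ⟨j', hj'⟩ := Set.mem_iUnion.1 this
      obtain ⟨z, hz, hzy⟩ := hj'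
      refine Set.mem_iUnion.2 ⟨Fin.cons j0 j', ?_⟩
      refine ⟨z, ?_, ?_⟩
      · exact hz
      · show wordMap m S ω (k+1) (Fin.cons j0 j') z = x
        have hcons : (fun l : Fin k => (Fin.cons j0 j' : ∀ l : Fin (k+1), Fin (m (ω l))) l.succ) = j' := by
          funext l; exact Fin.cons_succ (α := fun l : Fin (k+1) => Fin (m (ω ↑l))) j0 j' l
        show (S (ω 0) ((Fin.cons j0 j' : ∀ l : Fin (k+1), Fin (m (ω l))) 0) ∘
          wordMap m S (fun n => ω (n+1)) k
            (fun l => (Fin.cons j0 j' : ∀ l : Fin (k+1), Fin (m (ω l))) l.succ)) z = x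
        rw [hcons]
        simp only [Function.comp_apply]
        erw [Fin.cons_zero]
        rw [hzy, hxy0]

end Words

section Words2
variable {K : Type*} [MetricSpace K] {N : ℕ} {m : Fin N → ℕ}
  {S : ∀ i, Fin (m i) → K → K}


lemma wordMap_bounds [Nontrivial K] (hS : ∀ i j, IsBiLipContraction (S i j)) :
    ∀ (k : ℕ) (ω : ℕ → Fin N) (j : ∀ l : Fin k, Fin (m (ω l))),
      ∃ c C : ℝ, 0 < c ∧ 0 < C ∧
        ∀ x y, c * dist x y ≤ dist (wordMap m S ω k j x) (wordMap m S ω k j y) ∧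
          dist (wordMap m S ω k j x) (wordMap m S ω k j y) ≤ C * dist x y := by
  intro k
  induction k with
  | zero =>
      intro ω j
      exact ⟨1, 1, one_pos, one_pos, fun x y => by simp [wordMap]⟩
  | succ k ih =>
      intro ω j
      obtain ⟨c', C', hc', hC', hW⟩ := ih (fun n => ω (n+1)) (fun l => j l.succ)
      obtain ⟨c0, C0, hc0, _, hS0⟩ := hS (ω 0) (j 0)
      have hC0 : 0 < C0 := by
        obtain ⟨x, y, hxy⟩ := exists_pair_ne K
        have hd : 0 < dist x y := dist_pos.2 hxy
        have h1 := (hS0 x y).1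
        have h2 := (hS0 x y).2
        nlinarith
      refine ⟨c0 * c', C0 * C', by positivity, by positivity, fun x y => ?_⟩
      set W := wordMap m S (fun n => ω (n+1)) k (fun l => j l.succ)
      have e : wordMap m S ω (k+1) j = S (ω 0) (j 0) ∘ W := rfl
      rw [e]
      simp only [Function.comp_apply]
      constructor
      · calc c0 * c' * dist x y = c0 * (c' * dist x y) := by ring
        _ ≤ c0 * dist (W x) (W y) := mul_le_mul_of_nonneg_left (hW x y).1 hc0.le
        _ ≤ dist (S (ω 0) (j 0) (W x)) (S (ω 0) (j 0) (W y)) := (hS0 _ _).1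
      · calc dist (S (ω 0) (j 0) (W x)) (S (ω 0) (j 0) (W y)) ≤ C0 * dist (W x) (W y) :=
            (hS0 _ _).2
        _ ≤ C0 * (C' * dist x y) := mul_le_mul_of_nonneg_left (hW x y).2 hC0.le
        _ = C0 * C' * dist x y := by ring

lemma good_of_bounds [Nontrivial K] {φ : K → K} {c C : ℝ} (hc : 0 < c)
    (h : ∀ x y, c * dist x y ≤ dist (φ x) (φ y) ∧ dist (φ x) (φ y) ≤ C * dist x y) :
    0 < lipPlus φ ∧ ∀ x y, dist (φ x) (φ y) ≤ lipPlus φ * dist x y := by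
  obtain ⟨x₀, y₀, hxy₀⟩ := exists_pair_ne K
  have hne : (ratioSet φ).Nonempty := ⟨_, x₀, y₀, hxy₀, rfl⟩
  have hbdd : BddAbove (ratioSet φ) := by
    refine ⟨C, fun t ht => ?_⟩
    obtain ⟨x, y, hxy, rfl⟩ := ht
    have hd : 0 < dist x y := dist_pos.2 hxy
    rw [div_le_iff₀ hd]
    exact (h x y).2
  have hpos : 0 < lipPlus φ := by
    show 0 < sSup (ratioSet φ)
    have hd : 0 < dist x₀ y₀ := dist_pos.2 hxy₀
    have hmem : dist (φ x₀) (φ y₀) / dist x₀ y₀ ∈ ratioSet φ := ⟨x₀, y₀, hxy₀, rfl⟩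
    have h1 : c ≤ dist (φ x₀) (φ y₀) / dist x₀ y₀ := by
      rw [le_div_iff₀ hd]
      exact (h x₀ y₀).1
    have h2 := le_csSup hbdd hmem
    have := h1.trans h2
    linarith
  refine ⟨hpos, fun x y => ?_⟩
  by_cases hxy : x = y
  · subst hxy; simp
  · have hd : 0 < dist x y := dist_pos.2 hxy
    have hmem : dist (φ x) (φ y) / dist x y ∈ ratioSet φ := ⟨x, y, hxy, rfl⟩
    have := le_csSup hbdd hmem
    rw [div_le_iff₀ hd] at this
    exact this

end Words2

section Congr
variable {K : Type*} [MetricSpace K] {N : ℕ} {m : Fin N → ℕ}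
  {S : ∀ i, Fin (m i) → K → K}

lemma sum_word_congr {α : Type*} [AddCommMonoid α] :
    ∀ (k : ℕ) (ω ω' : ℕ → Fin N), (∀ l, l < k → ω l = ω' l) → ∀ (f : (K → K) → α),
      ∑ j : (∀ l : Fin k, Fin (m (ω l))), f (wordMap m S ω k j) =
        ∑ j : (∀ l : Fin k, Fin (m (ω' l))), f (wordMap m S ω' k j) := by
  intro k
  induction k with
  | zero =>
      intro ω ω' h f
      rw [Fintype.sum_unique, Fintype.sum_unique]
      rfl
  | succ k ih =>
      intro ω ω' h f
      have h0 : ω 0 = ω' 0 := h 0 (Nat.succ_pos k)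
      -- split both sides via Fin.consEquiv
      rw [← (Fin.consEquiv (fun l : Fin (k+1) => Fin (m (ω l)))).sum_comp
          (fun j => f (wordMap m S ω (k+1) j)),
        ← (Fin.consEquiv (fun l : Fin (k+1) => Fin (m (ω' l)))).sum_comp
          (fun j => f (wordMap m S ω' (k+1) j)),
        Fintype.sum_prod_type, Fintype.sum_prod_type]
      have key : ∀ (j0 : Fin (m (ω 0))) (j' : ∀ l : Fin k, Fin (m (ω (l+1)))),
          f (wordMap m S ω (k+1) (Fin.consEquiv _ (j0, j'))) =
            f (S (ω 0) j0 ∘ wordMap m S (fun n => ω (n+1)) k j') := by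
        intro j0 j'
        congr 1
      have key' : ∀ (j0 : Fin (m (ω' 0))) (j' : ∀ l : Fin k, Fin (m (ω' (l+1)))),
          f (wordMap m S ω' (k+1) (Fin.consEquiv _ (j0, j'))) =
            f (S (ω' 0) j0 ∘ wordMap m S (fun n => ω' (n+1)) k j') := by
        intro j0 j'
        congr 1
      calc (∑ j0 : Fin (m (ω 0)), ∑ j' : (∀ l : Fin k, Fin (m (ω (l+1)))),
              f (wordMap m S ω (k+1) (Fin.consEquiv _ (j0, j'))))
          = ∑ j0 : Fin (m (ω 0)), ∑ j' : (∀ l : Fin k, Fin (m (ω (l+1)))),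
              f (S (ω 0) j0 ∘ wordMap m S (fun n => ω (n+1)) k j') := by
            refine Finset.sum_congr rfl fun j0 _ => Finset.sum_congr rfl fun j' _ => key j0 j'
        _ = ∑ j0 : Fin (m (ω 0)), ∑ j' : (∀ l : Fin k, Fin (m (ω' (l+1)))),
              f (S (ω 0) j0 ∘ wordMap m S (fun n => ω' (n+1)) k j') := by
            refine Finset.sum_congr rfl fun j0 _ => ?_
            exact ih (fun n => ω (n+1)) (fun n => ω' (n+1))
              (fun l hl => h (l+1) (by omega)) (fun ψ => f (S (ω 0) j0 ∘ ψ))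
        _ = ∑ j0 : Fin (m (ω' 0)), ∑ j' : (∀ l : Fin k, Fin (m (ω' (l+1)))),
              f (S (ω' 0) j0 ∘ wordMap m S (fun n => ω' (n+1)) k j') := by
            rw [h0]
        _ = ∑ j0 : Fin (m (ω' 0)), ∑ j' : (∀ l : Fin k, Fin (m (ω' (l+1)))),
              f (wordMap m S ω' (k+1) (Fin.consEquiv _ (j0, j'))) := by
            refine Finset.sum_congr rfl fun j0 _ => Finset.sum_congr rfl fun j' _ => (key' j0 j').symm

end Congr

section Main
variable {K : Type*} [MetricSpace K] {N : ℕ} {m : Fin N → ℕ}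
  {S : ∀ i, Fin (m i) → K → K}

/-- `∑_j Lip⁺(word)^p` over words of length `k`, as an extended real. -/
noncomputable def wordSum (m : Fin N → ℕ) (S : ∀ i, Fin (m i) → K → K) (p : ℝ)
    (ω : ℕ → Fin N) (k : ℕ) : ℝ≥0∞ :=
  ∑ j : (∀ l : Fin k, Fin (m (ω l))), ENNReal.ofReal (lipPlus (wordMap m S ω k j) ^ p)

lemma wordMap_good [Nontrivial K] (hS : ∀ i j, IsBiLipContraction (S i j))
    (ω : ℕ → Fin N) (k : ℕ) (j : ∀ l : Fin k, Fin (m (ω l))) :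
    0 < lipPlus (wordMap m S ω k j) ∧
      ∀ x y, dist (wordMap m S ω k j x) (wordMap m S ω k j y) ≤
        lipPlus (wordMap m S ω k j) * dist x y := by
  obtain ⟨c, C, hc, _, hb⟩ := wordMap_bounds hS k ω j
  exact good_of_bounds hc hb

lemma measure_step [Nontrivial K] (hS : ∀ i j, IsBiLipContraction (S i j))
    {p : ℝ} (hp0 : 0 ≤ p) (ω : ℕ → Fin N) (k : ℕ) :
    packingMeasure (fun t => t ^ p) (attractorOf m S Set.univ ω) ≤
      wordSum m S p ω k *
        packingMeasure (fun t => t ^ p) (attractorOf m S Set.univ (fun n => ω (n + k))) := by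
  calc packingMeasure (fun t => t ^ p) (attractorOf m S Set.univ ω)
      ≤ packingMeasure (fun t => t ^ p)
          (⋃ j : (∀ l : Fin k, Fin (m (ω l))),
            wordMap m S ω k j '' attractorOf m S Set.univ (fun n => ω (n + k))) :=
        packingMeasure_mono (attractor_decomp hS k ω)
    _ ≤ ∑ j : (∀ l : Fin k, Fin (m (ω l))),
          packingMeasure (fun t => t ^ p)
            (wordMap m S ω k j '' attractorOf m S Set.univ (fun n => ω (n + k))) :=
        packingMeasure_iUnion_le _
    _ ≤ ∑ j : (∀ l : Fin k, Fin (m (ω l))),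
          ENNReal.ofReal (lipPlus (wordMap m S ω k j) ^ p) *
            packingMeasure (fun t => t ^ p) (attractorOf m S Set.univ (fun n => ω (n + k))) := by
        refine Finset.sum_le_sum fun j _ => ?_
        obtain ⟨hpos, hlip⟩ := wordMap_good hS ω k j
        exact packingMeasure_image_le hp0 hpos hlip _
    _ = wordSum m S p ω k *
          packingMeasure (fun t => t ^ p) (attractorOf m S Set.univ (fun n => ω (n + k))) :=
        (Finset.sum_mul _ _ _).symm

lemma wordSum_congr {p : ℝ} (k : ℕ) (ω ω' : ℕ → Fin N) (h : ∀ l, l < k → ω l = ω' l) :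
    wordSum m S p ω k = wordSum m S p ω' k :=
  sum_word_congr k ω ω' h (fun φ => ENNReal.ofReal (lipPlus φ ^ p))

lemma wordSum_lt_top {p : ℝ} (ω : ℕ → Fin N) (k : ℕ) : wordSum m S p ω k < ⊤ :=
  ENNReal.sum_lt_top.2 fun _ _ => ENNReal.ofReal_lt_top

/-- packing measure vanishes for positive exponent on a subsingleton space -/
lemma packingMeasure_subsingleton [Subsingleton K] {p : ℝ} (hp : 0 < p) (F : Set K) :
    packingMeasure (fun t => t ^ p) F = 0 := by
  refine le_antisymm ?_ zero_le
  have hpre : ∀ U : Set K, packingPre (fun t => t ^ p) U = 0 := by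
    intro U
    have hsup : ∀ δ : ℝ, 0 < δ → packSup (fun t => t ^ p) U δ ≤ ENNReal.ofReal (δ ^ p) := by
      intro δ hδ
      refine iSup_le fun s => iSup_le fun c => iSup_le fun r => iSup_le fun h1 => iSup_le fun h2 => ?_
      rcases Set.eq_empty_or_nonempty s with rfl | ⟨n, hn⟩
      · simp
      · have hone : ∀ b' : s, b' ≠ ⟨n, hn⟩ →
            ENNReal.ofReal ((2 * r (b' : ℕ)) ^ p) = 0 := by
          rintro ⟨b, hb⟩ hne
          exfalso
          have hbn : b ≠ n := fun h => hne (by simpa [Subtype.ext_iff] using h)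
          have hdisj := h2 hb hn hbn
          have h1b := (h1 b hb).2.1
          have h1n := (h1 n hn).2.1
          have hb1 : c b ∈ Metric.closedBall (c b) (r b) := Metric.mem_closedBall_self h1b.le
          have hb2 : c b ∈ Metric.closedBall (c n) (r n) := by
            rw [show c b = c n from Subsingleton.elim _ _]
            exact Metric.mem_closedBall_self h1n.le
          exact Set.disjoint_left.1 hdisj hb1 hb2
        rw [tsum_eq_single (⟨n, hn⟩ : s) hone]
        have := (h1 n hn).2
        exact ENNReal.ofReal_le_ofReal (Real.rpow_le_rpow (by linarith [this.1]) this.2 hp.le)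
    have hlim : Filter.Tendsto (fun i : ℕ => ENNReal.ofReal ((1 / (i + 1) : ℝ) ^ p))
        Filter.atTop (nhds 0) := by
      have h1 : Filter.Tendsto (fun i : ℕ => (1 / (i + 1) : ℝ)) Filter.atTop (nhds 0) :=
        tendsto_one_div_add_atTop_nhds_zero_nat
      have h2 : ContinuousAt (fun x : ℝ => x ^ p) 0 :=
        Real.continuousAt_rpow_const 0 p (Or.inr hp.le)
      have h3 := (h2.tendsto.comp h1)
      rw [Real.zero_rpow hp.ne'] at h3
      have := (ENNReal.continuous_ofReal.tendsto 0).comp h3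
      simpa [Function.comp_def] using this
    refine le_antisymm ?_ zero_le
    refine ge_of_tendsto' hlim fun i => ?_
    calc packingPre (fun t => t ^ p) U ≤ packSup (fun t => t ^ p) U (1 / (i + 1)) :=
          packingPre_le _ (by positivity)
      _ ≤ ENNReal.ofReal ((1 / (i + 1) : ℝ) ^ p) := hsup _ (by positivity)
  calc packingMeasure (fun t => t ^ p) F
      ≤ ∑' _ : ℕ, packingPre (fun t => t ^ p) (Set.univ : Set K) :=
        packingMeasure_le_tsum (fun _ => Set.univ) (fun x _ => Set.mem_iUnion.2 ⟨0, trivial⟩)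
    _ = 0 := by simp [hpre]

end Main

/-- If `p = sup_u dim_P F_u`, some `v ∈ Ω` satisfies
`∑_{words of length k} Lip⁺(S_{v₁,j₁} ∘ ⋯ ∘ S_{v_k,j_k})^p → 0`, and
`sup_u 𝒫^p(F_u) < ∞`, then the set of `ω` with `𝒫^p(F_ω) = 0` is residual. -/
theorem typical_packing_eq_zero {K : Type*} [MetricSpace K] [CompactSpace K] [Nonempty K]
    {N : ℕ} (hN : 0 < N) (m : Fin N → ℕ) (hm : ∀ i, 0 < m i)
    (S : ∀ i, Fin (m i) → K → K) (hS : ∀ i j, IsBiLipContraction (S i j))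
    (p : ℝ) (hp0 : 0 ≤ p)
    (hp : ENNReal.ofReal p = ⨆ u : ℕ → Fin N, packingDim (attractorOf m S Set.univ u))
    (v : ℕ → Fin N)
    (hv : Filter.Tendsto
      (fun k : ℕ => ∑ j : (∀ l : Fin k, Fin (m (v l))), lipPlus (wordMap m S v k j) ^ p)
      Filter.atTop (nhds 0))
    (hfin : (⨆ u : ℕ → Fin N, packingMeasure (fun t => t ^ p) (attractorOf m S Set.univ u)) < ⊤) :
    {ω : ℕ → Fin N | packingMeasure (fun t => t ^ p) (attractorOf m S Set.univ ω) = 0} ∈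
      residual (ℕ → Fin N) := by
  classical
  have hwordsne : ∀ k : ℕ, Nonempty (∀ l : Fin k, Fin (m (v l))) :=
    fun k => ⟨fun l => ⟨0, hm _⟩⟩
  -- first : p must be positive
  have hppos : 0 < p := by
    rcases eq_or_lt_of_le hp0 with hp0' | hp0'
    · exfalso
      have hterm : ∀ k : ℕ,
          (∑ j : (∀ l : Fin k, Fin (m (v l))), lipPlus (wordMap m S v k j) ^ p) =
            (Fintype.card (∀ l : Fin k, Fin (m (v l))) : ℝ) := by
        intro k
        rw [← hp0']
        simp [Real.rpow_zero]
      have hcard : ∀ k : ℕ, (1:ℝ) ≤ ∑ j : (∀ l : Fin k, Fin (m (v l))),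
          lipPlus (wordMap m S v k j) ^ p := by
        intro k
        rw [hterm k]
        have := Fintype.card_pos (α := ∀ l : Fin k, Fin (m (v l)))
        exact_mod_cast this
      have := (hv.eventually_lt_const (by norm_num : (0:ℝ) < 1)).exists
      obtain ⟨k, hk⟩ := this
      linarith [hcard k]
    · exact hp0'
  rcases subsingleton_or_nontrivial K with hsub | hnt
  · -- subsingleton case: the packing measure is identically zero
    have : {ω : ℕ → Fin N | packingMeasure (fun t => t ^ p) (attractorOf m S Set.univ ω) = 0}
        = Set.univ := by
      refine Set.eq_univ_of_forall fun ω => ?_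
      exact packingMeasure_subsingleton hppos _
    rw [this]
    exact Filter.univ_mem
  -- main case
  set T : (ℕ → Fin N) → ℝ≥0∞ :=
    fun ω => packingMeasure (fun t => t ^ p) (attractorOf m S Set.univ ω) with hT
  set M : ℝ≥0∞ := ⨆ u : ℕ → Fin N, T u with hM
  have hTleM : ∀ u, T u ≤ M := fun u => le_iSup T u
  have hMtop : M ≠ ⊤ := hfin.ne
  have step : ∀ (ω : ℕ → Fin N) (k : ℕ),
      T ω ≤ wordSum m S p ω k * T (fun n => ω (n + k)) :=
    fun ω k => measure_step hS hp0 ω k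
  -- convergence of the v-sums in ℝ≥0∞
  have hBv : Filter.Tendsto (fun k => wordSum m S p v k) Filter.atTop (nhds 0) := by
    have heq : ∀ k, wordSum m S p v k =
        ENNReal.ofReal (∑ j : (∀ l : Fin k, Fin (m (v l))), lipPlus (wordMap m S v k j) ^ p) := by
      intro k
      rw [ENNReal.ofReal_sum_of_nonneg]
      · rfl
      · intro j _
        exact Real.rpow_nonneg (wordMap_good hS v k j).1.le p
    have := (ENNReal.continuous_ofReal.tendsto 0).comp hv
    simp only [ENNReal.ofReal_zero] at this
    refine this.congr fun k => (heq k).symm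
  -- the open dense sets
  set U : ℕ → Set (ℕ → Fin N) := fun q =>
    {ω | ∃ n k : ℕ, (∀ l, l < k → ω (l + n) = v l) ∧
      wordSum m S p ω n * (wordSum m S p v k * M) < ((q:ℝ≥0∞)+1)⁻¹} with hU
  have hUopen : ∀ q, IsOpen (U q) := by
    intro q
    have : U q = ⋃ (n : ℕ) (k : ℕ), {ω : ℕ → Fin N | (∀ l, l < k → ω (l + n) = v l) ∧
        wordSum m S p ω n * (wordSum m S p v k * M) < ((q:ℝ≥0∞)+1)⁻¹} := by
      ext ω; simp [hU, Set.mem_iUnion]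
    rw [this]
    refine isOpen_iUnion fun n => isOpen_iUnion fun k => ?_
    rw [isOpen_iff_mem_nhds]
    intro ω₀ hω₀
    rw [_root_.mem_nhds_iff]
    refine ⟨⋂ l : Fin (n+k), {ω : ℕ → Fin N | ω l = ω₀ l}, ?_, ?_, ?_⟩
    · intro ω hω
      simp only [Set.mem_iInter, Set.mem_setOf_eq] at hω
      have hag : ∀ l, l < n + k → ω l = ω₀ l := fun l hl => hω ⟨l, hl⟩
      obtain ⟨h1, h2⟩ := hω₀
      constructor
      · intro l hl
        rw [hag (l + n) (by omega)]
        exact h1 l hl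
      · rwa [wordSum_congr n ω ω₀ fun l hl => hag l (by omega)]
    · refine isOpen_iInter_of_finite fun l => ?_
      have he : {ω : ℕ → Fin N | ω (l:ℕ) = ω₀ (l:ℕ)} =
          (fun ω : ℕ → Fin N => ω (l:ℕ)) ⁻¹' {ω₀ (l:ℕ)} := rfl
      rw [he]
      exact (continuous_apply ((l : Fin (n+k)) : ℕ)).isOpen_preimage _ (isOpen_discrete _)
    · simp
  have hUdense : ∀ q, Dense (U q) := by
    intro q
    rw [dense_iff_inter_open]
    rintro O hO ⟨ω₀, hω₀⟩
    obtain ⟨I, u, hIu, hsub⟩ := isOpen_pi_iff.1 hO ω₀ hω₀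
    set n : ℕ := I.sup id + 1 with hn
    have hIn : ∀ i ∈ I, i < n := by
      intro i hi
      have h := Finset.le_sup (f := id) hi
      simp only [id_eq] at h
      omega
    set ω : ℕ → Fin N := fun l => if l < n then ω₀ l else v (l - n) with hω
    have hωO : ω ∈ O := by
      refine hsub ?_
      intro i hi
      have : ω i = ω₀ i := by simp [hω, hIn i hi]
      rw [this]
      exact (hIu i hi).2
    -- choose k
    set t : ℝ≥0∞ := ((q:ℝ≥0∞)+1)⁻¹ with ht
    have ht0 : t ≠ 0 := by
      rw [ht]
      exact ENNReal.inv_ne_zero.2 (by simp)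
    set D : ℝ≥0∞ := wordSum m S p ω n * M + 1 with hD
    have hD0 : D ≠ 0 := by simp [hD]
    have hDt : D ≠ ⊤ := by
      rw [hD]
      exact ENNReal.add_ne_top.2 ⟨ENNReal.mul_ne_top (wordSum_lt_top ω n).ne hMtop, ENNReal.one_ne_top⟩
    have hε : (0:ℝ≥0∞) < t / D := ENNReal.div_pos ht0 hDt
    obtain ⟨k, hk⟩ := (hBv.eventually_lt_const hε).exists
    have hagree : ∀ l, l < k → ω (l + n) = v l := by
      intro l hl
      have h1 : ¬ (l + n < n) := by omega
      simp only [hω, h1, if_false]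
      congr 1
      omega
    have hbound : wordSum m S p ω n * (wordSum m S p v k * M) < t := by
      calc wordSum m S p ω n * (wordSum m S p v k * M)
          = wordSum m S p v k * (wordSum m S p ω n * M) := by ring
        _ ≤ wordSum m S p v k * D := by
            refine mul_le_mul_right ?_ _
            rw [hD]; exact le_self_add
        _ < (t / D) * D := by
            rw [ENNReal.mul_lt_mul_iff_left hD0 hDt]
            exact hk
        _ = t := ENNReal.div_mul_cancel hD0 hDt
    exact ⟨ω, hωO, n, k, hagree, hbound⟩
  -- conclude via residual
  rw [mem_residual_iff]
  refine ⟨Set.range U, ?_, ?_, Set.countable_range U, ?_⟩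
  · rintro _ ⟨q, rfl⟩; exact hUopen q
  · rintro _ ⟨q, rfl⟩; exact hUdense q
  · rw [Set.sInter_range]
    intro ω hω
    simp only [Set.mem_iInter] at hω
    show T ω = 0
    by_contra hT0
    obtain ⟨q, hq⟩ := ENNReal.exists_inv_nat_lt hT0
    have hmem := hω q
    obtain ⟨n, k, hagree, hbound⟩ := hmem
    have hstep2 : T (fun n' => ω (n' + n)) ≤ wordSum m S p v k * M := by
      calc T (fun n' => ω (n' + n))
          ≤ wordSum m S p (fun n' => ω (n' + n)) k * T (fun n' => ω (n' + k + n)) := step _ k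
        _ ≤ wordSum m S p (fun n' => ω (n' + n)) k * M := mul_le_mul_right (hTleM _) _
        _ = wordSum m S p v k * M := by
            rw [wordSum_congr k (fun n' => ω (n' + n)) v hagree]
    have hTω : T ω < ((q:ℝ≥0∞)+1)⁻¹ := by
      calc T ω ≤ wordSum m S p ω n * T (fun n' => ω (n' + n)) := step ω n
        _ ≤ wordSum m S p ω n * (wordSum m S p v k * M) := mul_le_mul_right hstep2 _
        _ < ((q:ℝ≥0∞)+1)⁻¹ := hbound
    have hqq : ((q:ℝ≥0∞)+1)⁻¹ ≤ ((q:ℝ≥0∞))⁻¹ := by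
      gcongr
      exact le_self_add
    exact absurd (hq.trans (hTω.trans_le hqq)) (lt_irrefl _)
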